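/- Let p ≥ 1, let Σ : ℝ^p → PD_p(ℝ) assign to each point a real positive definite p×p matrix, and let t > 0. Then the non-stationary Gaussian kernel K(x,y) = φ_xy exp(−Q_xy(x−y)/t²) is positive semidefinite on ℝ^p × ℝ^p: for every n ∈ ℕ, all points x_1, …, x_n ∈ ℝ^p and all real coefficients c_1, …, c_n, ∑_{i,j} c_i c_j K(x_i, x_j) ≥ 0. -/

import Mathlib

open MeasureTheory Matrix Real

/-- `Q_xy(h) = hᵀ ((Σx+Σy)/2)⁻¹ h`. -/
noncomputable def Qform {p : ℕ} (A B : Matrix (Fin p) (Fin p) ℝ) (h : Fin p → ℝ) : ℝ :=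
  h ⬝ᵥ ((((2:ℝ)⁻¹ • (A + B))⁻¹).mulVec h)

/-- `φ_xy = det(Σx)^{1/4} det(Σy)^{1/4} det((Σx+Σy)/2)^{-1/2}`. -/
noncomputable def phiFactor {p : ℕ} (A B : Matrix (Fin p) (Fin p) ℝ) : ℝ :=
  A.det ^ ((1:ℝ) / 4) * B.det ^ ((1:ℝ) / 4) * ((2:ℝ)⁻¹ • (A + B)).det ^ (-(1:ℝ) / 2)

variable {p : ℕ}

lemma map_mulVec_volume (M : Matrix (Fin p) (Fin p) ℝ) (hM : M.det ≠ 0) :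
    Measure.map (fun z : Fin p → ℝ => M *ᵥ z) volume
      = ENNReal.ofReal |M.det|⁻¹ • volume := by
  have h1 : (fun z : Fin p → ℝ => M *ᵥ z) = (Matrix.toLin' M : (Fin p → ℝ) →ₗ[ℝ] (Fin p → ℝ)) := by
    ext z i; simp [Matrix.toLin'_apply]
  have h2 : LinearMap.det (Matrix.toLin' M) = M.det := by
    rw [← LinearMap.det_toMatrix', LinearMap.toMatrix'_toLin']
  rw [h1, Real.map_linearMap_volume_pi_eq_smul_volume_pi (by rw [h2]; exact hM), h2, abs_inv]

lemma integral_comp_mulVec (M : Matrix (Fin p) (Fin p) ℝ) (hM : M.det ≠ 0)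
    {g : (Fin p → ℝ) → ℝ} (hg : Continuous g) :
    ∫ z : Fin p → ℝ, g (M *ᵥ z) = |M.det|⁻¹ * ∫ w : Fin p → ℝ, g w := by
  have hmeas : AEMeasurable (fun z : Fin p → ℝ => M *ᵥ z) volume := by
    exact (Continuous.aemeasurable (by continuity))
  have := integral_map (μ := (volume : Measure (Fin p → ℝ))) hmeas
    (f := g) (hg.aestronglyMeasurable)
  rw [← this, map_mulVec_volume M hM, integral_smul_measure]
  simp [ENNReal.toReal_ofReal (by positivity : (0:ℝ) ≤ |M.det|⁻¹)]

lemma integrable_comp_mulVec (M : Matrix (Fin p) (Fin p) ℝ) (hM : M.det ≠ 0)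
    {g : (Fin p → ℝ) → ℝ} (hg : Continuous g) (hgi : Integrable g) :
    Integrable (fun z : Fin p → ℝ => g (M *ᵥ z)) := by
  have hmeas : AEMeasurable (fun z : Fin p → ℝ => M *ᵥ z) volume :=
    (Continuous.aemeasurable (by continuity))
  rw [show (fun z : Fin p → ℝ => g (M *ᵥ z)) = g ∘ (fun z => M *ᵥ z) from rfl,
    ← integrable_map_measure hg.aestronglyMeasurable hmeas, map_mulVec_volume M hM]
  exact hgi.smul_measure (by simp)

lemma integral_pi_gauss (p : ℕ) :
    ∫ w : Fin p → ℝ, Real.exp (-(w ⬝ᵥ w)) = Real.pi ^ ((p:ℝ)/2) := by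
  have h := GaussianFourier.integral_rexp_neg_mul_sq_norm (V := EuclideanSpace ℝ (Fin p)) (b := 1) one_pos
  have hmp := (EuclideanSpace.volume_preserving_symm_measurableEquiv_toLp (Fin p))
  rw [← hmp.integral_comp (MeasurableEquiv.toLp 2 (Fin p → ℝ)).symm.measurableEmbedding]
  have key : ∀ v : EuclideanSpace ℝ (Fin p),
      ((MeasurableEquiv.toLp 2 (Fin p → ℝ)).symm v ⬝ᵥ (MeasurableEquiv.toLp 2 (Fin p → ℝ)).symm v)
      = ‖v‖^2 := by
    intro v
    rw [EuclideanSpace.norm_eq, Real.sq_sqrt (by positivity)]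
    simp [dotProduct, sq]
  simp only [key]
  simpa using h

lemma integrable_pi_gauss (p : ℕ) :
    Integrable (fun w : Fin p → ℝ => Real.exp (-(w ⬝ᵥ w))) := by
  have h := (GaussianFourier.integrable_cexp_neg_mul_sum_add (ι := Fin p) (b := 1)
    (by simp) (fun _ => 0)).norm
  convert h using 2 with w
  simp only [Complex.norm_exp]
  congr 1
  push_cast
  simp [dotProduct, sq]


lemma posDef_smul {A : Matrix (Fin p) (Fin p) ℝ} (hA : A.PosDef) {c : ℝ} (hc : 0 < c) :
    (c • A).PosDef := by
  refine ⟨?_, fun x hx => ?_⟩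
  · unfold Matrix.IsHermitian
    rw [Matrix.conjTranspose_smul]
    rw [hA.1]
    simp
  · have := hA.2 hx
    exact (hA.smul hc).2 hx

lemma dot_symm (M : Matrix (Fin p) (Fin p) ℝ) (hM : Mᵀ = M) (u v : Fin p → ℝ) :
    u ⬝ᵥ M *ᵥ v = v ⬝ᵥ M *ᵥ u := by
  have h : v ᵥ* M = M *ᵥ v := by
    conv_lhs => rw [← hM]
    exact Matrix.vecMul_transpose M v
  rw [dotProduct_mulVec v M u, h, dotProduct_comm]

lemma mulVec_dot (M : Matrix (Fin p) (Fin p) ℝ) (u w : Fin p → ℝ) :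
    (M *ᵥ u) ⬝ᵥ w = u ⬝ᵥ (Mᵀ *ᵥ w) := by
  rw [dotProduct_mulVec u Mᵀ w, Matrix.vecMul_transpose]

lemma expand_sq (M : Matrix (Fin p) (Fin p) ℝ) (hM : Mᵀ = M) (u v : Fin p → ℝ) :
    (u - v) ⬝ᵥ M *ᵥ (u - v)
      = u ⬝ᵥ M *ᵥ u - 2 * (u ⬝ᵥ M *ᵥ v) + v ⬝ᵥ M *ᵥ v := by
  rw [Matrix.mulVec_sub, sub_dotProduct, dotProduct_sub, dotProduct_sub,
    dot_symm M hM v u]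
  ring

section CompleteSquare
variable {A B : Matrix (Fin p) (Fin p) ℝ}

lemma hermit_transpose {M : Matrix (Fin p) (Fin p) ℝ} (h : M.IsHermitian) : Mᵀ = M := by
  have := h.eq
  rwa [Matrix.conjTranspose_eq_transpose_of_trivial] at this

lemma L1 (hA : A.PosDef) (hB : B.PosDef) :
    A * (A + B)⁻¹ * B = A - A * (A + B)⁻¹ * A := by
  have hC : (A + B).PosDef := hA.add hB
  have h : A * (A + B)⁻¹ * (A + B) = A := by
    rw [Matrix.mul_assoc, Matrix.nonsing_inv_mul _ (Ne.isUnit hC.det_pos.ne'), Matrix.mul_one]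
  calc A * (A + B)⁻¹ * B = A * (A + B)⁻¹ * (A + B) - A * (A + B)⁻¹ * A := by
        rw [Matrix.mul_add]; abel
    _ = A - A * (A + B)⁻¹ * A := by rw [h]

lemma L2 (hA : A.PosDef) (hB : B.PosDef) :
    B * (A + B)⁻¹ * A = A - A * (A + B)⁻¹ * A := by
  have hC : (A + B).PosDef := hA.add hB
  have h : (A + B) * ((A + B)⁻¹ * A) = A := by
    rw [← Matrix.mul_assoc, Matrix.mul_nonsing_inv _ (Ne.isUnit hC.det_pos.ne'), Matrix.one_mul]
  calc B * (A + B)⁻¹ * A = (A + B) * ((A + B)⁻¹ * A) - A * ((A + B)⁻¹ * A) := by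
        rw [Matrix.add_mul]; simp only [Matrix.mul_assoc]; abel
    _ = A - A * (A + B)⁻¹ * A := by rw [h, Matrix.mul_assoc]

lemma L3 (hA : A.PosDef) (hB : B.PosDef) :
    B - B * (A + B)⁻¹ * B = A - A * (A + B)⁻¹ * A := by
  have := L1 hB hA
  rw [add_comm B A] at this
  rw [← this, L2 hA hB]

lemma invt (hA : A.PosDef) (hB : B.PosDef) : ((A + B)⁻¹)ᵀ = (A + B)⁻¹ := by
  rw [Matrix.transpose_nonsing_inv, hermit_transpose (hA.add hB).isHermitian]

lemma Dtrans (hA : A.PosDef) (hB : B.PosDef) :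
    (A * (A + B)⁻¹ * B)ᵀ = A * (A + B)⁻¹ * B := by
  have hAt : Aᵀ = A := hermit_transpose hA.isHermitian
  have hBt : Bᵀ = B := hermit_transpose hB.isHermitian
  calc (A * (A + B)⁻¹ * B)ᵀ = B * ((A + B)⁻¹ * A) := by
        rw [Matrix.transpose_mul, Matrix.transpose_mul, hAt, hBt, invt hA hB]
    _ = A - A * (A + B)⁻¹ * A := by rw [← Matrix.mul_assoc]; exact L2 hA hB
    _ = A * (A + B)⁻¹ * B := (L1 hA hB).symm

/-- the z-free part of completing the square -/
lemma const_identity (hA : A.PosDef) (hB : B.PosDef) (x y : Fin p → ℝ) :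
    ((A + B)⁻¹ *ᵥ (A *ᵥ x + B *ᵥ y)) ⬝ᵥ (A *ᵥ x + B *ᵥ y)
      + (x - y) ⬝ᵥ (A * (A + B)⁻¹ * B) *ᵥ (x - y)
    = x ⬝ᵥ A *ᵥ x + y ⬝ᵥ B *ᵥ y := by
  have hAt : Aᵀ = A := hermit_transpose hA.isHermitian
  have hBt : Bᵀ = B := hermit_transpose hB.isHermitian
  have hCt := invt hA hB
  have e1 : ((A + B)⁻¹ *ᵥ (A *ᵥ x + B *ᵥ y)) ⬝ᵥ (A *ᵥ x + B *ᵥ y)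
      = x ⬝ᵥ (A * (A + B)⁻¹ * A) *ᵥ x + x ⬝ᵥ (A * (A + B)⁻¹ * B) *ᵥ y
        + y ⬝ᵥ (B * (A + B)⁻¹ * A) *ᵥ x + y ⬝ᵥ (B * (A + B)⁻¹ * B) *ᵥ y := by
    rw [mulVec_dot, hCt, add_dotProduct, Matrix.mulVec_add,
      dotProduct_add, dotProduct_add]
    simp only [mulVec_dot, Matrix.mulVec_mulVec, hAt, hBt, ← Matrix.mul_assoc]
    ring
  have e2 : (x - y) ⬝ᵥ (A * (A + B)⁻¹ * B) *ᵥ (x - y)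
      = x ⬝ᵥ (A * (A + B)⁻¹ * B) *ᵥ x - 2 * (x ⬝ᵥ (A * (A + B)⁻¹ * B) *ᵥ y)
        + y ⬝ᵥ (A * (A + B)⁻¹ * B) *ᵥ y :=
    expand_sq _ (Dtrans hA hB) x y
  rw [e1, e2]
  have k1 : x ⬝ᵥ (A * (A + B)⁻¹ * B) *ᵥ x
      = x ⬝ᵥ A *ᵥ x - x ⬝ᵥ (A * (A + B)⁻¹ * A) *ᵥ x := by
    rw [L1 hA hB, Matrix.sub_mulVec, dotProduct_sub]
  have k2 : y ⬝ᵥ (A * (A + B)⁻¹ * B) *ᵥ y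
      = y ⬝ᵥ B *ᵥ y - y ⬝ᵥ (B * (A + B)⁻¹ * B) *ᵥ y := by
    rw [show A * (A + B)⁻¹ * B = B - B * (A + B)⁻¹ * B from by rw [L1 hA hB, L3 hA hB],
      Matrix.sub_mulVec, dotProduct_sub]
  have k3 : y ⬝ᵥ (B * (A + B)⁻¹ * A) *ᵥ x = x ⬝ᵥ (A * (A + B)⁻¹ * B) *ᵥ y := by
    rw [show B * (A + B)⁻¹ * A = A * (A + B)⁻¹ * B from by rw [L2 hA hB, L1 hA hB],
      dot_symm _ (Dtrans hA hB) y x]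
  rw [k1, k2, k3]
  ring

/-- completing the square -/
lemma complete_square (hA : A.PosDef) (hB : B.PosDef) (x y z : Fin p → ℝ) :
    (z - x) ⬝ᵥ A *ᵥ (z - x) + (z - y) ⬝ᵥ B *ᵥ (z - y)
      = (z - (A + B)⁻¹ *ᵥ (A *ᵥ x + B *ᵥ y)) ⬝ᵥ (A + B) *ᵥ
          (z - (A + B)⁻¹ *ᵥ (A *ᵥ x + B *ᵥ y))
        + (x - y) ⬝ᵥ (A * (A + B)⁻¹ * B) *ᵥ (x - y) := by
  have hC : (A + B).PosDef := hA.add hB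
  have hAt : Aᵀ = A := hermit_transpose hA.isHermitian
  have hBt : Bᵀ = B := hermit_transpose hB.isHermitian
  have hCt : (A + B)ᵀ = A + B := hermit_transpose hC.isHermitian
  rw [expand_sq A hAt z x, expand_sq B hBt z y, expand_sq (A + B) hCt z _]
  have h1 : z ⬝ᵥ (A + B) *ᵥ z = z ⬝ᵥ A *ᵥ z + z ⬝ᵥ B *ᵥ z := by
    rw [Matrix.add_mulVec, dotProduct_add]
  have h2 : (A + B) *ᵥ ((A + B)⁻¹ *ᵥ (A *ᵥ x + B *ᵥ y)) = A *ᵥ x + B *ᵥ y := by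
    rw [Matrix.mulVec_mulVec, Matrix.mul_nonsing_inv _ (Ne.isUnit hC.det_pos.ne'),
      Matrix.one_mulVec]
  have h3 : ((A + B)⁻¹ *ᵥ (A *ᵥ x + B *ᵥ y)) ⬝ᵥ (A + B) *ᵥ ((A + B)⁻¹ *ᵥ (A *ᵥ x + B *ᵥ y))
      = ((A + B)⁻¹ *ᵥ (A *ᵥ x + B *ᵥ y)) ⬝ᵥ (A *ᵥ x + B *ᵥ y) := by rw [h2]
  rw [h3, h2]
  have h4 := const_identity hA hB x y
  have h5 : z ⬝ᵥ (A *ᵥ x + B *ᵥ y) = z ⬝ᵥ A *ᵥ x + z ⬝ᵥ B *ᵥ y := dotProduct_add _ _ _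
  rw [h1, h5]
  linarith [h4]

end CompleteSquare

section SqrtCompat
open scoped MatrixOrder

noncomputable def Matrix.PosSemidef.sqrt {M : Matrix (Fin p) (Fin p) ℝ} (_ : M.PosSemidef) :
    Matrix (Fin p) (Fin p) ℝ :=
  CFC.sqrt M

lemma Matrix.PosSemidef.sqrt_mul_self {M : Matrix (Fin p) (Fin p) ℝ} (hM : M.PosSemidef) :
    hM.sqrt * hM.sqrt = M :=
  CFC.sqrt_mul_sqrt_self M hM.nonneg

lemma Matrix.PosSemidef.posSemidef_sqrt {M : Matrix (Fin p) (Fin p) ℝ} (hM : M.PosSemidef) :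
    hM.sqrt.PosSemidef :=
  (CFC.sqrt_nonneg M).posSemidef

end SqrtCompat

section GaussPD
variable {M : Matrix (Fin p) (Fin p) ℝ}

lemma sqrt_det_facts (hM : M.PosDef) :
    |((hM.posSemidef.sqrt).det)|⁻¹ = M.det ^ (-(1:ℝ)/2) := by
  have h2 : (hM.posSemidef.sqrt).det * (hM.posSemidef.sqrt).det = M.det := by
    rw [← Matrix.det_mul, hM.posSemidef.sqrt_mul_self]
  have habs : |(hM.posSemidef.sqrt).det| = Real.sqrt M.det := by
    rw [← h2, ← sq, Real.sqrt_sq_eq_abs]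
  rw [habs, show (-(1:ℝ)/2) = -(1/2) from by norm_num, Real.rpow_neg hM.det_pos.le,
    ← Real.sqrt_eq_rpow]

lemma gauss_eq_comp (hM : M.PosDef) (z : Fin p → ℝ) :
    z ⬝ᵥ M *ᵥ z = (hM.posSemidef.sqrt *ᵥ z) ⬝ᵥ (hM.posSemidef.sqrt *ᵥ z) := by
  have hSt : (hM.posSemidef.sqrt)ᵀ = hM.posSemidef.sqrt :=
    hermit_transpose hM.posSemidef.posSemidef_sqrt.isHermitian
  rw [mulVec_dot, hSt, Matrix.mulVec_mulVec, hM.posSemidef.sqrt_mul_self]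

lemma sqrt_det_ne_zero (hM : M.PosDef) : (hM.posSemidef.sqrt).det ≠ 0 := by
  intro h
  have h2 : (hM.posSemidef.sqrt).det * (hM.posSemidef.sqrt).det = M.det := by
    rw [← Matrix.det_mul, hM.posSemidef.sqrt_mul_self]
  rw [h, mul_zero] at h2
  exact hM.det_pos.ne' h2.symm

lemma integral_gauss_pd (hM : M.PosDef) :
    ∫ z : Fin p → ℝ, Real.exp (-(z ⬝ᵥ M *ᵥ z))
      = Real.pi ^ ((p:ℝ)/2) * M.det ^ (-(1:ℝ)/2) := by
  have hg : Continuous fun w : Fin p → ℝ => Real.exp (-(w ⬝ᵥ w)) := by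
    apply Real.continuous_exp.comp
    exact Continuous.neg (by unfold dotProduct; fun_prop)
  calc ∫ z : Fin p → ℝ, Real.exp (-(z ⬝ᵥ M *ᵥ z))
      = ∫ z : Fin p → ℝ, Real.exp (-((hM.posSemidef.sqrt *ᵥ z) ⬝ᵥ (hM.posSemidef.sqrt *ᵥ z))) := by
        simp_rw [gauss_eq_comp hM]
    _ = |(hM.posSemidef.sqrt).det|⁻¹ * ∫ w : Fin p → ℝ, Real.exp (-(w ⬝ᵥ w)) :=
        integral_comp_mulVec _ (sqrt_det_ne_zero hM) hg
    _ = Real.pi ^ ((p:ℝ)/2) * M.det ^ (-(1:ℝ)/2) := by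
        rw [integral_pi_gauss, sqrt_det_facts hM]; ring

lemma integrable_gauss_pd (hM : M.PosDef) :
    Integrable (fun z : Fin p → ℝ => Real.exp (-(z ⬝ᵥ M *ᵥ z))) := by
  have hg : Continuous fun w : Fin p → ℝ => Real.exp (-(w ⬝ᵥ w)) := by
    apply Real.continuous_exp.comp
    exact Continuous.neg (by unfold dotProduct; fun_prop)
  have := integrable_comp_mulVec _ (sqrt_det_ne_zero hM) hg (integrable_pi_gauss p)
  convert this using 2 with z
  rw [gauss_eq_comp hM]

lemma integral_gauss_pd_shift (hM : M.PosDef) (m : Fin p → ℝ) :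
    ∫ z : Fin p → ℝ, Real.exp (-((z - m) ⬝ᵥ M *ᵥ (z - m)))
      = Real.pi ^ ((p:ℝ)/2) * M.det ^ (-(1:ℝ)/2) := by
  rw [integral_sub_right_eq_self (fun z : Fin p → ℝ => Real.exp (-(z ⬝ᵥ M *ᵥ z))) m]
  exact integral_gauss_pd hM

lemma integrable_gauss_pd_shift (hM : M.PosDef) (m : Fin p → ℝ) :
    Integrable (fun z : Fin p → ℝ => Real.exp (-((z - m) ⬝ᵥ M *ᵥ (z - m)))) :=
  (integrable_gauss_pd hM).comp_sub_right m

end GaussPD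

lemma rpow_collect {a : ℝ} (ha : 0 < a) (b c : ℝ) : a ^ b * a ^ c = a ^ (b + c) :=
  (Real.rpow_add ha b c).symm

lemma inv_rpow_eq {a : ℝ} (ha : 0 < a) (c : ℝ) : a⁻¹ ^ c = a ^ (-c) := by
  rw [← Real.rpow_neg_one, ← Real.rpow_mul ha.le]
  norm_num

lemma pow_rpow_eq {a : ℝ} (ha : 0 < a) (n : ℕ) (c : ℝ) : (a ^ n) ^ c = a ^ ((n:ℝ) * c) := by
  rw [← Real.rpow_natCast a n, ← Real.rpow_mul ha.le]

lemma const_scalar (p : ℕ) {dx dy dg t : ℝ} (hdx : 0 < dx) (hdy : 0 < dy)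
    (hdg : 0 < dg) (ht : 0 < t) :
    (dx ^ (-(1:ℝ)/4) * (π * t^2/4) ^ (-(p:ℝ)/4)) * (dy ^ (-(1:ℝ)/4) * (π * t^2/4) ^ (-(p:ℝ)/4))
      * (π ^ ((p:ℝ)/2) * ((2/t^2)^(p:ℕ) * (dx⁻¹ * dg * dy⁻¹)) ^ (-(1:ℝ)/2))
    = dx ^ ((1:ℝ)/4) * dy ^ ((1:ℝ)/4) * (((2:ℝ)⁻¹)^(p:ℕ) * dg) ^ (-(1:ℝ)/2) := by
  have hπ := Real.pi_pos
  have ht2 : (0:ℝ) < 2/t^2 := by positivity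
  have hq : (0:ℝ) < π*t^2/4 := by positivity
  rw [show ((2/t^2)^(p:ℕ) * (dx⁻¹ * dg * dy⁻¹)) = ((2/t^2)^(p:ℕ) * dx⁻¹) * (dg * dy⁻¹) by ring]
  rw [Real.mul_rpow (by positivity) (by positivity),
      Real.mul_rpow (by positivity) (by positivity),
      Real.mul_rpow (by positivity) (by positivity),
      Real.mul_rpow (by positivity) (by positivity)]
  rw [pow_rpow_eq ht2, pow_rpow_eq (by positivity : (0:ℝ) < 2⁻¹),
      inv_rpow_eq hdx, inv_rpow_eq hdy, inv_rpow_eq two_pos]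
  -- now everything is rpow; collect dx and dy powers
  have hdx' : dx ^ (-(1:ℝ)/4) * dx ^ (-(-(1:ℝ)/2)) = dx ^ ((1:ℝ)/4) := by
    rw [rpow_collect hdx]; norm_num
  have hdy' : dy ^ (-(1:ℝ)/4) * dy ^ (-(-(1:ℝ)/2)) = dy ^ ((1:ℝ)/4) := by
    rw [rpow_collect hdy]; norm_num
  have hc : (π * t^2/4) ^ (-(p:ℝ)/4) * (π * t^2/4) ^ (-(p:ℝ)/4)
      * (π ^ ((p:ℝ)/2) * (2/t^2) ^ ((p:ℝ) * (-1/2)))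
      = (2:ℝ) ^ (-((p:ℝ) * (-1/2))) := by
    rw [rpow_collect hq]
    have e1 : -(p:ℝ)/4 + -(p:ℝ)/4 = (p:ℝ) * (-1/2) := by ring
    rw [e1]
    rw [show (π*t^2/4) ^ ((p:ℝ)*(-1/2)) * (π ^ ((p:ℝ)/2) * (2/t^2) ^ ((p:ℝ)*(-1/2)))
        = ((π*t^2/4) * (2/t^2)) ^ ((p:ℝ)*(-1/2)) * π ^ ((p:ℝ)/2) from by
      rw [Real.mul_rpow hq.le ht2.le]; ring]
    rw [show π * t^2/4 * (2/t^2) = π/2 from by field_simp; ring]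
    rw [show ((p:ℝ)*(-1/2)) = -((p:ℝ)/2) by ring, neg_neg]
    rw [Real.rpow_neg (by positivity : (0:ℝ) ≤ π/2), inv_mul_eq_div,
      ← Real.div_rpow hπ.le (by positivity : (0:ℝ) ≤ π/2),
      show π / (π/2) = (2:ℝ) from by field_simp]
  calc dx ^ (-(1:ℝ)/4) * (π * t^2/4) ^ (-(p:ℝ)/4) * (dy ^ (-(1:ℝ)/4) * (π * t^2/4) ^ (-(p:ℝ)/4)) *
        (π ^ ((p:ℝ)/2) * ((2/t^2) ^ ((p:ℝ) * (-1/2 : ℝ)) * dx ^ (-(-1/2 : ℝ)) *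
          (dg ^ (-(1:ℝ)/2) * dy ^ (-(-1/2 : ℝ)))))
      = (dx ^ (-(1:ℝ)/4) * dx ^ (-(-1/2 : ℝ))) * (dy ^ (-(1:ℝ)/4) * dy ^ (-(-1/2 : ℝ))) *
        ((π * t^2/4) ^ (-(p:ℝ)/4) * (π * t^2/4) ^ (-(p:ℝ)/4) *
          (π ^ ((p:ℝ)/2) * (2/t^2) ^ ((p:ℝ) * (-1/2 : ℝ)))) * dg ^ (-(1:ℝ)/2) := by ring
    _ = dx ^ ((1:ℝ)/4) * dy ^ ((1:ℝ)/4) * ((2:ℝ) ^ (-((p:ℝ) * (-1/2 : ℝ))) * dg ^ (-(1:ℝ)/2)) := by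
        rw [hdx', hdy', hc]; ring

noncomputable def gfun (t : ℝ) (P : Matrix (Fin p) (Fin p) ℝ) (x : Fin p → ℝ)
    (z : Fin p → ℝ) : ℝ :=
  P.det ^ (-(1:ℝ)/4) * (π * t^2/4) ^ (-(p:ℝ)/4) *
    Real.exp (-((z - x) ⬝ᵥ (((2:ℝ)/t^2) • P⁻¹) *ᵥ (z - x)))

section Pairwise
variable {P Q : Matrix (Fin p) (Fin p) ℝ} {t : ℝ}

lemma smul_inv_eq {N : Matrix (Fin p) (Fin p) ℝ} (hN : IsUnit N.det) {a : ℝ} (ha : a ≠ 0) :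
    (a • N)⁻¹ = a⁻¹ • N⁻¹ := by
  apply Matrix.inv_eq_right_inv
  rw [Matrix.smul_mul, Matrix.mul_smul, Matrix.mul_nonsing_inv _ hN, smul_smul,
    mul_inv_cancel₀ ha, one_smul]

lemma smul_dot (a : ℝ) (N : Matrix (Fin p) (Fin p) ℝ) (u : Fin p → ℝ) :
    u ⬝ᵥ (a • N) *ᵥ u = a * (u ⬝ᵥ N *ᵥ u) := by
  rw [Matrix.smul_mulVec, dotProduct_smul, smul_eq_mul]

lemma hsum_lemma (hP : P.PosDef) (hQ : Q.PosDef) :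
    P⁻¹ + Q⁻¹ = Q⁻¹ * (P + Q) * P⁻¹ := by
  have h1 : Q⁻¹ * (P + Q) * P⁻¹ = Q⁻¹ * P * P⁻¹ + Q⁻¹ * Q * P⁻¹ := by
    rw [Matrix.mul_add, Matrix.add_mul]
  rw [h1, Matrix.mul_assoc Q⁻¹ P P⁻¹,
    Matrix.mul_nonsing_inv _ (Ne.isUnit hP.det_pos.ne'),
    Matrix.nonsing_inv_mul _ (Ne.isUnit hQ.det_pos.ne'), Matrix.mul_one, Matrix.one_mul]
  abel

lemma hsuminv_lemma (hP : P.PosDef) (hQ : Q.PosDef) :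
    (P⁻¹ + Q⁻¹)⁻¹ = P * (P + Q)⁻¹ * Q := by
  rw [hsum_lemma hP hQ, Matrix.mul_inv_rev, Matrix.mul_inv_rev,
    Matrix.nonsing_inv_nonsing_inv _ (Ne.isUnit hP.det_pos.ne'),
    Matrix.nonsing_inv_nonsing_inv _ (Ne.isUnit hQ.det_pos.ne'), Matrix.mul_assoc]

lemma sum_inv_posdef (hP : P.PosDef) (hQ : Q.PosDef) : (P⁻¹ + Q⁻¹).PosDef :=
  hP.inv.add hQ.inv

lemma D_lemma (hP : P.PosDef) (hQ : Q.PosDef) (ht : 0 < t) :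
    (((2:ℝ)/t^2) • P⁻¹) * ((((2:ℝ)/t^2) • P⁻¹) + (((2:ℝ)/t^2) • Q⁻¹))⁻¹ * (((2:ℝ)/t^2) • Q⁻¹)
      = ((2:ℝ)/t^2) • (P + Q)⁻¹ := by
  have ha : ((2:ℝ)/t^2) ≠ 0 := by positivity
  rw [← smul_add, smul_inv_eq (Ne.isUnit (sum_inv_posdef hP hQ).det_pos.ne') ha,
    hsuminv_lemma hP hQ]
  rw [Matrix.smul_mul, Matrix.mul_smul, Matrix.smul_mul, Matrix.mul_smul, Matrix.smul_mul]
  rw [smul_smul, smul_smul]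
  rw [show (2:ℝ)/t^2 * ((2:ℝ)/t^2) * ((2:ℝ)/t^2)⁻¹ = (2:ℝ)/t^2 from by field_simp]
  congr 1
  calc P⁻¹ * (P * (P + Q)⁻¹ * Q) * Q⁻¹ = (P⁻¹ * P) * (P + Q)⁻¹ * (Q * Q⁻¹) := by
        simp only [Matrix.mul_assoc]
    _ = (P + Q)⁻¹ := by
        rw [Matrix.nonsing_inv_mul _ (Ne.isUnit hP.det_pos.ne'),
          Matrix.mul_nonsing_inv _ (Ne.isUnit hQ.det_pos.ne'), Matrix.one_mul, Matrix.mul_one]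

lemma half_inv_lemma (hP : P.PosDef) (hQ : Q.PosDef) :
    ((2:ℝ)⁻¹ • (P + Q))⁻¹ = (2:ℝ) • (P + Q)⁻¹ := by
  rw [smul_inv_eq (Ne.isUnit (hP.add hQ).det_pos.ne') (by norm_num), inv_inv]

lemma r_eq_Q (hP : P.PosDef) (hQ : Q.PosDef) (ht : 0 < t) (u : Fin p → ℝ) :
    u ⬝ᵥ (((2:ℝ)/t^2) • (P + Q)⁻¹) *ᵥ u = Qform P Q u / t^2 := by
  rw [smul_dot, Qform, half_inv_lemma hP hQ]
  rw [show (((2:ℝ) • (P + Q)⁻¹).mulVec u) = ((2:ℝ) • (P + Q)⁻¹) *ᵥ u from rfl, smul_dot]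
  ring

lemma detAB_lemma (hP : P.PosDef) (hQ : Q.PosDef) (ht : 0 < t) :
    ((((2:ℝ)/t^2) • P⁻¹) + (((2:ℝ)/t^2) • Q⁻¹)).det
      = ((2:ℝ)/t^2)^p * (P.det⁻¹ * (P + Q).det * Q.det⁻¹) := by
  rw [← smul_add, Matrix.det_smul, hsum_lemma hP hQ, Matrix.det_mul, Matrix.det_mul,
    Matrix.det_nonsing_inv, Matrix.det_nonsing_inv]
  rw [Fintype.card_fin]
  simp only [Ring.inverse_eq_inv']
  ring

end Pairwise

noncomputable def Amat (t : ℝ) (P : Matrix (Fin p) (Fin p) ℝ) : Matrix (Fin p) (Fin p) ℝ :=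
  ((2:ℝ)/t^2) • P⁻¹

noncomputable def mvec (t : ℝ) (P Q : Matrix (Fin p) (Fin p) ℝ) (x y : Fin p → ℝ) :
    Fin p → ℝ :=
  (Amat t P + Amat t Q)⁻¹ *ᵥ (Amat t P *ᵥ x + Amat t Q *ᵥ y)

section PairKey
variable {P Q : Matrix (Fin p) (Fin p) ℝ} {t : ℝ}

lemma Amat_posDef (hP : P.PosDef) (ht : 0 < t) : (Amat t P).PosDef :=
  posDef_smul hP.inv (by positivity)

lemma gfun_mul_pt (hP : P.PosDef) (hQ : Q.PosDef) (ht : 0 < t) (x y z : Fin p → ℝ) :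
    gfun t P x z * gfun t Q y z
      = (P.det ^ (-(1:ℝ)/4) * (π * t^2/4) ^ (-(p:ℝ)/4)
          * (Q.det ^ (-(1:ℝ)/4) * (π * t^2/4) ^ (-(p:ℝ)/4))
          * Real.exp (-((x - y) ⬝ᵥ (Amat t P * (Amat t P + Amat t Q)⁻¹ * Amat t Q) *ᵥ (x - y))))
        * Real.exp (-((z - mvec t P Q x y) ⬝ᵥ (Amat t P + Amat t Q) *ᵥ (z - mvec t P Q x y))) := by
  have hA : (Amat t P).PosDef := Amat_posDef hP ht
  have hB : (Amat t Q).PosDef := Amat_posDef hQ ht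
  unfold gfun
  rw [show ∀ a b c d : ℝ, (a * Real.exp c) * (b * Real.exp d)
      = (a * b) * Real.exp (c + d) from by
    intro a b c d; rw [Real.exp_add]; ring]
  rw [show -((z - x) ⬝ᵥ (((2:ℝ)/t^2) • P⁻¹) *ᵥ (z - x))
      + -((z - y) ⬝ᵥ (((2:ℝ)/t^2) • Q⁻¹) *ᵥ (z - y))
      = -(((z - x) ⬝ᵥ (Amat t P) *ᵥ (z - x))
        + ((z - y) ⬝ᵥ (Amat t Q) *ᵥ (z - y))) from by rw [Amat, Amat]; ring]
  rw [complete_square hA hB x y z]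
  rw [show (z - (Amat t P + Amat t Q)⁻¹ *ᵥ (Amat t P *ᵥ x + Amat t Q *ᵥ y))
      = z - mvec t P Q x y from by rw [mvec]]
  rw [neg_add, Real.exp_add]
  ring

lemma pair_integrable (hP : P.PosDef) (hQ : Q.PosDef) (ht : 0 < t) (x y : Fin p → ℝ) :
    Integrable (fun z => gfun t P x z * gfun t Q y z) := by
  have hAB : (Amat t P + Amat t Q).PosDef := (Amat_posDef hP ht).add (Amat_posDef hQ ht)
  simp_rw [gfun_mul_pt hP hQ ht x y]
  exact (integrable_gauss_pd_shift hAB _).const_mul _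

lemma pair_integral (hP : P.PosDef) (hQ : Q.PosDef) (ht : 0 < t) (x y : Fin p → ℝ) :
    ∫ z : Fin p → ℝ, gfun t P x z * gfun t Q y z
      = phiFactor P Q * Real.exp (-(Qform P Q (x - y)) / t ^ 2) := by
  have hAB : (Amat t P + Amat t Q).PosDef := (Amat_posDef hP ht).add (Amat_posDef hQ ht)
  simp_rw [gfun_mul_pt hP hQ ht x y]
  rw [MeasureTheory.integral_const_mul, integral_gauss_pd_shift hAB]
  have hD : Amat t P * (Amat t P + Amat t Q)⁻¹ * Amat t Q = ((2:ℝ)/t^2) • (P + Q)⁻¹ := by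
    rw [Amat, Amat]; exact D_lemma hP hQ ht
  rw [hD, r_eq_Q hP hQ ht (x - y)]
  have hdet : (Amat t P + Amat t Q).det = ((2:ℝ)/t^2)^p * (P.det⁻¹ * (P + Q).det * Q.det⁻¹) := by
    rw [Amat, Amat]; exact detAB_lemma hP hQ ht
  rw [hdet]
  rw [phiFactor, Matrix.det_smul, Fintype.card_fin]
  rw [show -(Qform P Q (x - y) / t ^ 2) = -(Qform P Q (x - y)) / t^2 from by ring]
  rw [← const_scalar p hP.det_pos hQ.det_pos (hP.add hQ).det_pos ht]
  ring
end PairKey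


/-- the non-stationary Gaussian kernel
`K(x,y) = φ_xy exp(−Q_xy(x−y)/t²)` is positive semidefinite. -/
theorem nonstationary_gaussian_kernel_posSemidef (p : ℕ) (hp : 1 ≤ p)
    (S : (Fin p → ℝ) → Matrix (Fin p) (Fin p) ℝ) (hS : ∀ x, (S x).PosDef)
    (t : ℝ) (ht : 0 < t) :
    ∀ (n : ℕ) (x : Fin n → (Fin p → ℝ)) (c : Fin n → ℝ),
      0 ≤ ∑ i : Fin n, ∑ j : Fin n,
        c i * c j * (phiFactor (S (x i)) (S (x j)) *
          Real.exp (-(Qform (S (x i)) (S (x j)) (x i - x j)) / t ^ 2)) := by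
  intro n x c
  set g : Fin n → (Fin p → ℝ) → ℝ := fun i z => gfun t (S (x i)) (x i) z with hg
  have hint : ∀ i j, Integrable (fun z => g i z * g j z) := fun i j =>
    pair_integrable (hS _) (hS _) ht _ _
  have key : ∑ i : Fin n, ∑ j : Fin n,
      c i * c j * (phiFactor (S (x i)) (S (x j)) *
        Real.exp (-(Qform (S (x i)) (S (x j)) (x i - x j)) / t ^ 2))
      = ∫ z : Fin p → ℝ, (∑ i : Fin n, c i * g i z)^2 := by
    calc ∑ i : Fin n, ∑ j : Fin n,
        c i * c j * (phiFactor (S (x i)) (S (x j)) *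
          Real.exp (-(Qform (S (x i)) (S (x j)) (x i - x j)) / t ^ 2))
        = ∑ i : Fin n, ∑ j : Fin n, ∫ z : Fin p → ℝ, c i * c j * (g i z * g j z) := by
          refine Finset.sum_congr rfl fun i _ => Finset.sum_congr rfl fun j _ => ?_
          rw [MeasureTheory.integral_const_mul, pair_integral (hS _) (hS _) ht]
      _ = ∫ z : Fin p → ℝ, ∑ i : Fin n, ∑ j : Fin n, c i * c j * (g i z * g j z) := by
          rw [MeasureTheory.integral_finset_sum _
            (fun i _ => integrable_finset_sum _ fun j _ => ((hint i j).const_mul _))]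
          refine Finset.sum_congr rfl fun i _ => ?_
          rw [MeasureTheory.integral_finset_sum _ (fun j _ => ((hint i j).const_mul _))]
      _ = ∫ z : Fin p → ℝ, (∑ i : Fin n, c i * g i z)^2 := by
          congr 1
          funext z
          rw [sq, Finset.sum_mul_sum]
          refine Finset.sum_congr rfl fun i _ => Finset.sum_congr rfl fun j _ => ?_
          ring
  rw [key]
  exact integral_nonneg fun z => sq_nonneg _
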